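/- Let ρ₁, ρ₂ > 0 and consider the 4×4 complex matrix A with rows (0, −1, 0, 1/ρ₁), (1, 0, −1/ρ₁, 0), (0, −1/ρ₂, 0, −1), (1/ρ₂, 0, 1, 0). Then A has exactly four distinct complex eigenvalues, namely 1/√(ρ₁ρ₂) + i, 1/√(ρ₁ρ₂) − i, −1/√(ρ₁ρ₂) + i, and −1/√(ρ₁ρ₂) − i; equivalently, its characteristic polynomial factors as the product of (λ − λ₀) over these four values λ₀. (This shows the two poles of the b-coupled spin-oscillator are non-degenerate fixed points of focus-focus type.) -/

import Mathlib

open Polynomial Complex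

/-- At the two poles of the b-coupled spin-oscillator, the linearized operator
`Ω⁻¹d²L + 2·Ω⁻¹d²H` has exactly the four distinct complex eigenvalues
`±1/√(ρ₁ρ₂) ± i`; equivalently its characteristic polynomial factors as the
product of `(λ − λ₀)` over these four values.  Hence the poles are
non-degenerate fixed points of focus-focus type. -/
theorem bCSO_poles_focus_focus (ρ₁ ρ₂ : ℝ) (hρ₁ : 0 < ρ₁) (hρ₂ : 0 < ρ₂) :
    let A : Matrix (Fin 4) (Fin 4) ℂ :=
      !![0, -1, 0, 1 / (ρ₁ : ℂ);
         1, 0, -1 / (ρ₁ : ℂ), 0;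
         0, -1 / (ρ₂ : ℂ), 0, -1;
         1 / (ρ₂ : ℂ), 0, 1, 0]
    let r : ℂ := (1 / Real.sqrt (ρ₁ * ρ₂) : ℝ)
    List.Pairwise (· ≠ ·) [r + I, r - I, -r + I, -r - I] ∧
      A.charpoly = (X - C (r + I)) * (X - C (r - I)) * (X - C (-r + I)) * (X - C (-r - I)) := by
  intro A r
  have hρ₁' : (ρ₁:ℂ) ≠ 0 := by exact_mod_cast hρ₁.ne'
  have hρ₂' : (ρ₂:ℂ) ≠ 0 := by exact_mod_cast hρ₂.ne'
  have hsq : Real.sqrt (ρ₁*ρ₂) ^ 2 = ρ₁*ρ₂ := Real.sq_sqrt (by positivity)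
  have hrim : r.im = 0 := by simp [r]
  have hrre : 0 < r.re := by
    have : 0 < Real.sqrt (ρ₁*ρ₂) := Real.sqrt_pos.2 (by positivity)
    simp [r]
    positivity
  have h1 : r ^ 2 = 1 / ((ρ₁:ℂ) * ρ₂) := by
    show ((1 / Real.sqrt (ρ₁*ρ₂) : ℝ) : ℂ) ^ 2 = _
    rw [← Complex.ofReal_pow, div_pow, one_pow, hsq]
    push_cast
    ring
  constructor
  · have hne : r.re ≠ -r.re := by linarith
    simp only [List.pairwise_cons, List.mem_cons, List.not_mem_nil, List.mem_singleton,
      forall_eq_or_imp, forall_eq, List.Pairwise.nil]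
    norm_num [Complex.ext_iff, hrim, hne]
  · apply Polynomial.funext
    intro z
    rw [Matrix.charpoly]
    simp [A, Matrix.charmatrix_apply, Matrix.det_succ_row_zero, Fin.sum_univ_succ,
      Matrix.submatrix_apply, Matrix.diagonal_apply]
    simp [Fin.succAbove, Fin.lt_iff_val_lt_val]
    have h2 := Complex.I_sq
    linear_combination (2*z^2 - (1 + 1/((ρ₁:ℂ)*ρ₂) + r^2 - I^2)) * h1 + (2*z^2 + (1 + 1/((ρ₁:ℂ)*ρ₂) + r^2 - I^2)) * h2
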